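/- Let R be a PID and T a finitely generated torsion R-module. Then Hom_R(T, Q(R)/R) is isomorphic to T, where Q(R) is the field of fractions of R. -/

import Mathlib

/-- The `R`-module `Q(R)/R`: the field of fractions of `R` modulo the image of `R`. -/
abbrev fractionsModOne (R : Type) [CommRing R] [IsDomain R] : Type :=
  (FractionRing R) ⧸ (LinearMap.range (Algebra.linearMap R (FractionRing R)))

section Aux

variable {R : Type} [CommRing R] {N : Type} [AddCommGroup N] [Module R N]

/-- Hom out of `R ⧸ R∙a` is the `a`-torsion. -/
noncomputable def homQuotSpanEquivTorsionBy (a : R) :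
    ((R ⧸ (R ∙ a)) →ₗ[R] N) ≃ₗ[R] Submodule.torsionBy R N a where
  toFun f := ⟨f (Submodule.Quotient.mk 1), by
    rw [Submodule.mem_torsionBy_iff, ← f.map_smul, ← Submodule.Quotient.mk_smul,
      smul_eq_mul, mul_one, (Submodule.Quotient.mk_eq_zero _).mpr
        (Submodule.mem_span_singleton_self a), f.map_zero]⟩
  map_add' f g := rfl
  map_smul' r f := rfl
  invFun x := Submodule.liftQSpanSingleton a (LinearMap.toSpanSingleton R N x)
    (by simpa using x.2)
  left_inv f := by
    apply LinearMap.ext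
    rintro ⟨r⟩
    show Submodule.liftQSpanSingleton a _ _ (Submodule.Quotient.mk r)
      = f (Submodule.Quotient.mk r)
    rw [Submodule.liftQSpanSingleton_apply, LinearMap.toSpanSingleton_apply,
      ← f.map_smul, ← Submodule.Quotient.mk_smul, smul_eq_mul, mul_one]
  right_inv x := by
    ext
    show Submodule.liftQSpanSingleton a _ _ (Submodule.Quotient.mk 1) = (x : N)
    rw [Submodule.liftQSpanSingleton_apply, LinearMap.toSpanSingleton_apply, one_smul]

end Aux

section Frac

variable (R : Type) [CommRing R] [IsDomain R]

/-- The `a`-torsion of `Q(R)/R` is `R ⧸ R∙a`. -/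
noncomputable def torsionByFracEquiv (a : R) (ha : a ≠ 0) :
    Submodule.torsionBy R (fractionsModOne R) a ≃ₗ[R] (R ⧸ (R ∙ a)) := by
  classical
  set K := FractionRing R
  have ha' : algebraMap R K a ≠ 0 := fun h =>
    ha (IsFractionRing.injective R K (h.trans (map_zero _).symm))
  -- the map r ↦ r / a : R → K, then to K/R
  let φ : R →ₗ[R] K := (algebraMap R K a)⁻¹ • Algebra.linearMap R K
  let ψ : R →ₗ[R] fractionsModOne R :=
    (LinearMap.range (Algebra.linearMap R K)).mkQ.comp φ
  have hψ : ∀ r : R, ψ r = Submodule.Quotient.mk ((algebraMap R K a)⁻¹ * algebraMap R K r) := by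
    intro r; rfl
  have hker : LinearMap.ker ψ = (R ∙ a) := by
    ext r
    simp only [LinearMap.mem_ker, hψ, Submodule.Quotient.mk_eq_zero, LinearMap.mem_range,
      Algebra.linearMap_apply, Submodule.mem_span_singleton]
    constructor
    · rintro ⟨s, hs⟩
      refine ⟨s, ?_⟩
      apply IsFractionRing.injective R K
      rw [smul_eq_mul, map_mul, hs]
      rw [mul_right_comm, inv_mul_cancel₀ ha', one_mul]
    · rintro ⟨s, rfl⟩
      refine ⟨s, ?_⟩
      rw [smul_eq_mul, map_mul]
      rw [mul_comm (algebraMap R K s), ← mul_assoc, inv_mul_cancel₀ ha', one_mul]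
  have hrange : LinearMap.range ψ = Submodule.torsionBy R (fractionsModOne R) a := by
    ext x
    constructor
    · rintro ⟨r, rfl⟩
      rw [Submodule.mem_torsionBy_iff, hψ, ← Submodule.Quotient.mk_smul,
        Submodule.Quotient.mk_eq_zero]
      refine ⟨r, ?_⟩
      simp only [Algebra.linearMap_apply, Algebra.smul_def]
      rw [← mul_assoc, mul_inv_cancel₀ ha', one_mul]
    · intro hx
      obtain ⟨q, rfl⟩ := Submodule.Quotient.mk_surjective _ x
      rw [Submodule.mem_torsionBy_iff, ← Submodule.Quotient.mk_smul,
        Submodule.Quotient.mk_eq_zero] at hx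
      obtain ⟨r, hr⟩ := hx
      refine ⟨r, ?_⟩
      rw [hψ]
      congr 1
      simp only [Algebra.linearMap_apply] at hr
      rw [Algebra.smul_def] at hr
      rw [inv_mul_eq_iff_eq_mul₀ ha', mul_comm]
      rw [hr]; ring
  exact ((Submodule.quotEquivOfEq _ _ hker).symm.trans
    (ψ.quotKerEquivRange.trans (LinearEquiv.ofEq _ _ hrange))).symm

end Frac

/-- Over a PID `R` with field of fractions `Q(R)`, for a finitely generated torsion
`R`-module `T`, the module `Hom_R(T, Q(R)/R)` is isomorphic to `T`. -/
theorem hom_into_fractionsModOne_iso_self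
    (R : Type) [CommRing R] [IsDomain R] [IsPrincipalIdealRing R]
    (T : Type) [AddCommGroup T] [Module R T] [Module.Finite R T]
    (hT : Module.IsTorsion R T) :
    Nonempty ((T →ₗ[R] fractionsModOne R) ≃ₗ[R] T) := by
  classical
  obtain ⟨ι, hfin, p, hp, e, ⟨f⟩⟩ := Module.equiv_directSum_of_isTorsion hT
  haveI := hfin
  let g : T ≃ₗ[R] ((i : ι) → R ⧸ (R ∙ p i ^ e i)) :=
    f.trans (DirectSum.linearEquivFunOnFintype R ι _)
  have hne : ∀ i, p i ^ e i ≠ 0 := fun i => pow_ne_zero _ (hp i).ne_zero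
  exact ⟨(LinearEquiv.arrowCongr g (LinearEquiv.refl R _)).trans
    (((LinearMap.lsum R _ R).symm).trans
      ((LinearEquiv.piCongrRight fun i =>
        (homQuotSpanEquivTorsionBy _).trans (torsionByFracEquiv R _ (hne i))).trans g.symm))⟩
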